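/- Let p ∈ (1,∞) and p' = p/(p−1). Let (Ω, 𝔉, P) be a complete probability space with a right-continuous filtration (𝔉_t)_{t∈[0,1]}. Let f : [0,1]×Ω → ℝ be progressively measurable with E ∫_0^1 |f(t)|^{p'} dt < ∞, and let φ : [0,1]×Ω → ℝ be progressively measurable with E ∫_0^1 |φ(t)|^p dt < ∞. Then ∫_0^1 E[ φ(s,·) · E[ ∫_s^1 f(t,·) dt | 𝔉_s ] ] ds = E[ ∫_0^1 f(t,·) (∫_0^t φ(s,·) ds) dt ]. In other words, the adjoint of the integration operator 𝓛(φ)(t) = ∫_0^t φ(s) ds, restricted to L_{p'}, is represented by 𝓛*(f)(t,ω) = E[ ∫_t^1 f(s,·) ds | 𝔉_t ](ω). -/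

import Mathlib

open MeasureTheory Set ENNReal

lemma exists_extension {Ω : Type*} {m : MeasurableSpace Ω} (ℱ : Filtration ℝ m)
    (f : ℝ → Ω → ℝ) (hf : ProgMeasurable ℱ f) :
    ∃ F : ℝ × Ω → ℝ, StronglyMeasurable F ∧ ∀ t ≤ (1:ℝ), ∀ ω, F (t, ω) = f t ω := by
  have h1 := hf 1
  have hmono : (Subtype.instMeasurableSpace.prod (ℱ 1) : MeasurableSpace (Set.Iic (1:ℝ) × Ω))
      ≤ Prod.instMeasurableSpace :=
    sup_le_sup le_rfl (MeasurableSpace.comap_mono (ℱ.le 1))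
  have h1' : StronglyMeasurable (fun q : Set.Iic (1:ℝ) × Ω => f q.1 q.2) := h1.mono hmono
  set e : Set.Iic (1:ℝ) × Ω → ℝ × Ω := Prod.map (↑) id with he_def
  have he : MeasurableEmbedding e :=
    (MeasurableEmbedding.subtype_coe measurableSet_Iic).prodMap MeasurableEmbedding.id
  refine ⟨Function.extend e (fun q => f q.1 q.2) (fun _ => 0),
    he.stronglyMeasurable_extend h1' stronglyMeasurable_const, fun t ht ω => ?_⟩
  have : (t, ω) = e (⟨⟨t, ht⟩, ω⟩ : Set.Iic (1:ℝ) × Ω) := rfl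
  rw [this, he.injective.extend_apply]

lemma jensen_one {α : Type*} [MeasurableSpace α] (μ : Measure α) (hμ : μ Set.univ = 1)
    {a b : ℝ} (hab : a.HolderConjugate b) {h : α → ℝ≥0∞} (hm : AEMeasurable h μ) :
    (∫⁻ x, h x ∂μ) ^ a ≤ ∫⁻ x, h x ^ a ∂μ := by
  have h2 := ENNReal.lintegral_mul_le_Lp_mul_Lq μ hab hm aemeasurable_const
    (f := h) (g := fun _ => 1)
  simp only [Pi.mul_apply, mul_one] at h2
  have h3 : (∫⁻ x, (fun _ : α => (1:ℝ≥0∞)) x ^ b ∂μ) ^ (1/b) = 1 := by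
    simp [ENNReal.one_rpow, lintegral_const, hμ]
  rw [h3, mul_one] at h2
  calc (∫⁻ x, h x ∂μ) ^ a ≤ ((∫⁻ x, h x ^ a ∂μ) ^ (1/a)) ^ a :=
        ENNReal.rpow_le_rpow h2 hab.nonneg
    _ = ∫⁻ x, h x ^ a ∂μ := by
        rw [← ENNReal.rpow_mul, one_div, inv_mul_cancel₀ hab.ne_zero, ENNReal.rpow_one]

lemma holder_fin {α : Type*} [MeasurableSpace α] {μ : Measure α} {a b : ℝ}
    (hab : a.HolderConjugate b) {u v : α → ℝ≥0∞} (hu : AEMeasurable u μ) (hv : AEMeasurable v μ)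
    (hua : ∫⁻ x, u x ^ a ∂μ < ⊤) (hvb : ∫⁻ x, v x ^ b ∂μ < ⊤) :
    ∫⁻ x, u x * v x ∂μ < ⊤ := by
  have h2 := ENNReal.lintegral_mul_le_Lp_mul_Lq μ hab hu hv
  have he : ∫⁻ x, u x * v x ∂μ = ∫⁻ x, (u * v) x ∂μ := rfl
  rw [he]
  refine lt_of_le_of_lt h2 (ENNReal.mul_lt_top ?_ ?_)
  · exact ENNReal.rpow_lt_top_of_nonneg (one_div_nonneg.mpr hab.nonneg) hua.ne
  · exact ENNReal.rpow_lt_top_of_nonneg (one_div_nonneg.mpr hab.symm.nonneg) hvb.ne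

/-- Adjoint identity for the integration operator `𝓛`: for `f ∈ L_{p'}` and
`φ ∈ L_p` (progressively measurable),
`∫_0^1 E[ φ(s)·E[∫_s^1 f dt | 𝔉_s] ] ds = E[ ∫_0^1 f(t) (∫_0^t φ(s) ds) dt ]`,
i.e. the restriction of `𝓛*` to `L_{p'}` is `𝓛*(f)(t,ω) = E[∫_t^1 f ds | 𝔉_t](ω)`. -/
theorem stmt_4 {Ω : Type*} {m : MeasurableSpace Ω} (P : Measure Ω)
    [IsProbabilityMeasure P] [P.IsComplete]
    (ℱ : Filtration ℝ m)
    (hright : ∀ t : ℝ, ℱ t = ⨅ s ∈ Set.Ioi t, ℱ s)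
    (p p' : ℝ) (hp : 1 < p) (hp' : p' = p / (p - 1))
    (f φ : ℝ → Ω → ℝ) (hf : ProgMeasurable ℱ f) (hφ : ProgMeasurable ℱ φ)
    (hfi : ∫⁻ ω, (∫⁻ t in Set.Icc (0 : ℝ) 1, (‖f t ω‖₊ : ℝ≥0∞) ^ p') ∂P < ⊤)
    (hφi : ∫⁻ ω, (∫⁻ t in Set.Icc (0 : ℝ) 1, (‖φ t ω‖₊ : ℝ≥0∞) ^ p) ∂P < ⊤) :
    ∫ s in (0 : ℝ)..1, ∫ ω, φ s ω * (P[fun ω' => ∫ t in s..(1 : ℝ), f t ω'|ℱ s]) ω ∂P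
      = ∫ ω, (∫ t in (0 : ℝ)..1, f t ω * (∫ s in (0 : ℝ)..t, φ s ω)) ∂P := by
  obtain ⟨F, hF, hFf⟩ := exists_extension ℱ f hf
  obtain ⟨Φ, hΦ, hΦφ⟩ := exists_extension ℱ φ hφ
  have hFm : Measurable F := hF.measurable
  have hΦm : Measurable Φ := hΦ.measurable
  have hpq : p.HolderConjugate p' := hp' ▸ Real.HolderConjugate.conjExponent hp
  have hp'q : p'.HolderConjugate p := hpq.symm
  set ν : Measure ℝ := volume.restrict (Ioc (0:ℝ) 1) with hν
  set νc : Measure ℝ := volume.restrict (Icc (0:ℝ) 1) with hνc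
  have hνc_univ : νc Set.univ = 1 := by
    rw [hνc, Measure.restrict_apply_univ, Real.volume_Icc]
    norm_num
  have hν_univ : ν Set.univ = 1 := by
    rw [hν, Measure.restrict_apply_univ, Real.volume_Ioc]
    norm_num
  -- the dominating functions
  set gF : Ω → ℝ≥0∞ := fun ω => ∫⁻ t, (‖F (t, ω)‖₊ : ℝ≥0∞) ∂νc with hgF
  set gΦ : Ω → ℝ≥0∞ := fun ω => ∫⁻ s, (‖Φ (s, ω)‖₊ : ℝ≥0∞) ∂νc with hgΦ
  have hgFmeas : Measurable gF := by
    apply Measurable.lintegral_prod_right'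
      (f := fun (q : Ω × ℝ) => (‖F (q.2, q.1)‖₊ : ℝ≥0∞))
    exact (hFm.comp measurable_swap).enorm
  have hgΦmeas : Measurable gΦ := by
    apply Measurable.lintegral_prod_right'
      (f := fun (q : Ω × ℝ) => (‖Φ (q.2, q.1)‖₊ : ℝ≥0∞))
    exact (hΦm.comp measurable_swap).enorm
  -- rewrite the hypotheses in terms of F, Φ
  have hfiF : ∫⁻ ω, (∫⁻ t, (‖F (t, ω)‖₊ : ℝ≥0∞) ^ p' ∂νc) ∂P < ⊤ := by
    refine lt_of_eq_of_lt (lintegral_congr fun ω => ?_) hfi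
    refine setLIntegral_congr_fun measurableSet_Icc ?_
    intro t ht
    dsimp only
    rw [hFf t ht.2 ω]
  have hφiΦ : ∫⁻ ω, (∫⁻ s, (‖Φ (s, ω)‖₊ : ℝ≥0∞) ^ p ∂νc) ∂P < ⊤ := by
    refine lt_of_eq_of_lt (lintegral_congr fun ω => ?_) hφi
    refine setLIntegral_congr_fun measurableSet_Icc ?_
    intro t ht
    dsimp only
    rw [hΦφ t ht.2 ω]
  -- moments of the dominating functions
  have hD : ∫⁻ ω, gF ω ^ p' ∂P < ⊤ := by
    refine lt_of_le_of_lt (lintegral_mono fun ω => ?_) hfiF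
    exact jensen_one νc hνc_univ hp'q ((hFm.comp (measurable_id.prodMk measurable_const)).enorm).aemeasurable
  have hE : ∫⁻ ω, gΦ ω ^ p ∂P < ⊤ := by
    refine lt_of_le_of_lt (lintegral_mono fun ω => ?_) hφiΦ
    exact jensen_one νc hνc_univ hpq ((hΦm.comp (measurable_id.prodMk measurable_const)).enorm).aemeasurable
  have hgF1 : ∫⁻ ω, gF ω ∂P < ⊤ := by
    have := holder_fin (μ := P) hp'q hgFmeas.aemeasurable aemeasurable_const
      (u := gF) (v := fun _ => 1) hD (by simp)
    simpa using this
  have hC : ∫⁻ ω, gF ω * gΦ ω ∂P < ⊤ :=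
    holder_fin hp'q hgFmeas.aemeasurable hgΦmeas.aemeasurable hD hE
  -- the kernel X (s, ω) = ∫ t in Ioc s 1, F (t, ω)
  set X : ℝ × Ω → ℝ := fun q => ∫ t, (if q.1 < t then F (t, q.2) else 0) ∂ν with hX
  have hGsm : StronglyMeasurable (fun r : (ℝ × Ω) × ℝ => if r.1.1 < r.2 then F (r.2, r.1.2) else 0) := by
    refine StronglyMeasurable.ite ?_ ?_ stronglyMeasurable_const
    · exact measurableSet_lt (measurable_fst.comp measurable_fst) measurable_snd
    · exact hF.comp_measurable (measurable_snd.prodMk (measurable_snd.comp measurable_fst))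
  have hXsm : StronglyMeasurable X := hGsm.integral_prod_right'
  have hXle : ∀ q : ℝ × Ω, (‖X q‖₊ : ℝ≥0∞) ≤ gF q.2 := by
    intro q
    refine le_trans (enorm_integral_le_lintegral_enorm _) ?_
    refine le_trans (lintegral_mono fun t => ?_) (lintegral_mono_set Ioc_subset_Icc_self)
    split_ifs with h
    · exact le_rfl
    · simp
  -- identification with the interval integral
  have hX_eq : ∀ s, 0 ≤ s → s ≤ 1 → ∀ ω, X (s, ω) = ∫ t in s..1, f t ω := by
    intro s hs0 hs1 ω
    have h1 : X (s, ω) = ∫ t, (Ioi s).indicator (fun t => F (t, ω)) t ∂ν := by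
      refine integral_congr_ae (Filter.Eventually.of_forall fun t => ?_)
      rw [Set.indicator_apply]
      simp [mem_Ioi]
    have h2 : Ioi s ∩ Ioc (0:ℝ) 1 = Ioc s 1 := by
      ext t
      simp only [mem_inter_iff, mem_Ioi, mem_Ioc]
      exact ⟨fun h => ⟨h.1, h.2.2⟩, fun h => ⟨h.1, lt_of_le_of_lt hs0 h.1, h.2⟩⟩
    rw [h1, integral_indicator measurableSet_Ioi, hν, Measure.restrict_restrict measurableSet_Ioi, h2,
      intervalIntegral.integral_of_le hs1]
    refine setIntegral_congr_fun measurableSet_Ioc fun t ht => ?_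
    exact hFf t ht.2 ω
  -- a.e. section integrability for Φ
  have hΦsec : ∀ᵐ s ∂ν, ∫⁻ ω, (‖Φ (s, ω)‖₊ : ℝ≥0∞) ^ p ∂P < ⊤ := by
    have hswap : ∫⁻ ω, (∫⁻ s, (‖Φ (s, ω)‖₊ : ℝ≥0∞) ^ p ∂νc) ∂P
        = ∫⁻ s, (∫⁻ ω, (‖Φ (s, ω)‖₊ : ℝ≥0∞) ^ p ∂P) ∂νc := by
      refine lintegral_lintegral_swap ?_
      exact (((hΦm.comp measurable_swap).enorm).pow_const p).aemeasurable
    have hfin : ∫⁻ s, (∫⁻ ω, (‖Φ (s, ω)‖₊ : ℝ≥0∞) ^ p ∂P) ∂νc < ⊤ := by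
      rw [← hswap]; exact hφiΦ
    have hmeas : Measurable fun s => ∫⁻ ω, (‖Φ (s, ω)‖₊ : ℝ≥0∞) ^ p ∂P := by
      apply Measurable.lintegral_prod_right'
        (f := fun (q : ℝ × Ω) => (‖Φ (q.1, q.2)‖₊ : ℝ≥0∞) ^ p)
      exact (hΦm.enorm).pow_const p
    have hae : ∀ᵐ s ∂νc, ∫⁻ ω, (‖Φ (s, ω)‖₊ : ℝ≥0∞) ^ p ∂P < ⊤ :=
      ae_lt_top hmeas hfin.ne
    exact ae_restrict_of_ae_restrict_of_subset Ioc_subset_Icc_self hae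
  -- Claim 1: pull-out property of the conditional expectation, a.e. in s
  have hClaim1 : ∀ᵐ s ∂ν,
      (∫ ω, φ s ω * (P[fun ω' => ∫ t in s..(1:ℝ), f t ω'|ℱ s]) ω ∂P)
        = ∫ ω, Φ (s, ω) * X (s, ω) ∂P := by
    have hmem : ∀ᵐ s ∂ν, s ∈ Ioc (0:ℝ) 1 := ae_restrict_mem measurableSet_Ioc
    filter_upwards [hΦsec, hmem] with s hsint hsmem
    have hs0 : (0:ℝ) ≤ s := hsmem.1.le
    have hs1 : s ≤ 1 := hsmem.2
    have hXseq : (fun ω' => ∫ t in s..(1:ℝ), f t ω') = fun ω => X (s, ω) :=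
      funext fun ω => (hX_eq s hs0 hs1 ω).symm
    rw [hXseq]
    have hXs_sm : StronglyMeasurable (fun ω => X (s, ω)) :=
      hXsm.comp_measurable measurable_prodMk_left
    have hXs_int : Integrable (fun ω => X (s, ω)) P :=
      ⟨hXs_sm.aestronglyMeasurable,
        lt_of_le_of_lt (lintegral_mono fun ω => hXle (s, ω)) hgF1⟩
    have hφs_sm : StronglyMeasurable[ℱ s] (φ s) := IsStronglyProgressive.stronglyAdapted hφ s
    have hφs_smm : AEStronglyMeasurable (φ s) P := (hφs_sm.mono (ℱ.le s)).aestronglyMeasurable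
    have hprod_int : Integrable (φ s * fun ω => X (s, ω)) P := by
      refine ⟨hφs_smm.mul hXs_sm.aestronglyMeasurable, ?_⟩
      have hbound : ∀ ω, (‖(φ s * fun ω => X (s, ω)) ω‖₊ : ℝ≥0∞)
          ≤ (‖Φ (s, ω)‖₊ : ℝ≥0∞) * gF ω := by
        intro ω
        rw [Pi.mul_apply, nnnorm_mul, ENNReal.coe_mul, hΦφ s hs1 ω]
        exact mul_le_mul' le_rfl (hXle (s, ω))
      refine lt_of_le_of_lt (lintegral_mono hbound) ?_
      exact holder_fin hpq ((hΦm.comp measurable_prodMk_left).enorm).aemeasurable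
        hgFmeas.aemeasurable hsint hD
    have hpull := condExp_mul_of_stronglyMeasurable_left hφs_sm hprod_int hXs_int
    calc ∫ ω, φ s ω * (P[fun ω => X (s, ω)|ℱ s]) ω ∂P
        = ∫ ω, (P[φ s * fun ω => X (s, ω)|ℱ s]) ω ∂P := (integral_congr_ae hpull).symm
      _ = ∫ ω, (φ s * fun ω => X (s, ω)) ω ∂P := integral_condExp (ℱ.le s)
      _ = ∫ ω, Φ (s, ω) * X (s, ω) ∂P := by
          refine integral_congr_ae (Filter.Eventually.of_forall fun ω => ?_)
          simp [Pi.mul_apply, hΦφ s hs1 ω]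
  have hgΦ1 : ∫⁻ ω, gΦ ω ∂P < ⊤ := by
    have := holder_fin (μ := P) hpq hgΦmeas.aemeasurable aemeasurable_const
      (u := gΦ) (v := fun _ => 1) hE (by simp)
    simpa using this
  -- Claim 2: integrability on the product space for the big swap
  have hHint : Integrable (Function.uncurry fun s ω => Φ (s, ω) * X (s, ω)) (ν.prod P) := by
    refine ⟨(hΦ.mul hXsm).aestronglyMeasurable, ?_⟩
    have hb : ∀ q : ℝ × Ω, (‖Function.uncurry (fun s ω => Φ (s, ω) * X (s, ω)) q‖₊ : ℝ≥0∞)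
        ≤ (‖Φ q‖₊ : ℝ≥0∞) * gF q.2 := by
      intro q
      rw [Function.uncurry_apply_pair, nnnorm_mul, ENNReal.coe_mul]
      exact mul_le_mul' le_rfl (hXle q)
    refine lt_of_le_of_lt (lintegral_mono hb) ?_
    have hswapl : ∫⁻ q, (‖Φ q‖₊ : ℝ≥0∞) * gF q.2 ∂(ν.prod P)
        = ∫⁻ ω, (∫⁻ s, (‖Φ (s, ω)‖₊ : ℝ≥0∞) * gF ω ∂ν) ∂P :=
      lintegral_prod_symm (fun q => (‖Φ q‖₊ : ℝ≥0∞) * gF q.2)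
        ((hΦm.enorm.mul (hgFmeas.comp measurable_snd)).aemeasurable)
    rw [hswapl]
    calc ∫⁻ ω, (∫⁻ s, (‖Φ (s, ω)‖₊ : ℝ≥0∞) * gF ω ∂ν) ∂P
        = ∫⁻ ω, (∫⁻ s, (‖Φ (s, ω)‖₊ : ℝ≥0∞) ∂ν) * gF ω ∂P := by
          refine lintegral_congr fun ω => ?_
          exact lintegral_mul_const _ ((hΦm.comp (measurable_id.prodMk measurable_const)).enorm)
      _ ≤ ∫⁻ ω, gΦ ω * gF ω ∂P := by
          refine lintegral_mono fun ω => ?_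
          exact mul_le_mul' (lintegral_mono_set Ioc_subset_Icc_self) le_rfl
      _ < ⊤ := by
          refine lt_of_eq_of_lt (lintegral_congr fun ω => mul_comm _ _) hC
  -- Claim 3: deterministic Fubini on the triangle, for a.e. ω
  have hClaim3 : ∀ᵐ ω ∂P, (∫ s, Φ (s, ω) * X (s, ω) ∂ν)
      = ∫ t, F (t, ω) * (∫ s in Ioc (0:ℝ) t, Φ (s, ω)) ∂ν := by
    filter_upwards [ae_lt_top hgFmeas hgF1.ne, ae_lt_top hgΦmeas hgΦ1.ne] with ω hgf hgp
    set k : ℝ → ℝ → ℝ := fun s t => if s < t then Φ (s, ω) * F (t, ω) else 0 with hk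
    have hksm : StronglyMeasurable (Function.uncurry k) := by
      refine StronglyMeasurable.ite (measurableSet_lt measurable_fst measurable_snd) ?_
        stronglyMeasurable_const
      exact (hΦ.comp_measurable (measurable_fst.prodMk measurable_const)).mul
        (hF.comp_measurable (measurable_snd.prodMk measurable_const))
    have hkint : Integrable (Function.uncurry k) (ν.prod ν) := by
      refine ⟨hksm.aestronglyMeasurable, ?_⟩
      have hb : ∀ q : ℝ × ℝ, (‖Function.uncurry k q‖₊ : ℝ≥0∞)
          ≤ (‖Φ (q.1, ω)‖₊ : ℝ≥0∞) * ‖F (q.2, ω)‖₊ := by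
        intro q
        rw [Function.uncurry_apply_pair]
        by_cases h : q.1 < q.2
        · rw [hk]; simp only [if_pos h]; rw [nnnorm_mul, ENNReal.coe_mul]
        · rw [hk]; simp only [if_neg h]; simp
      refine lt_of_le_of_lt (lintegral_mono hb) ?_
      have hswapk : ∫⁻ q, (‖Φ (q.1, ω)‖₊ : ℝ≥0∞) * ‖F (q.2, ω)‖₊ ∂(ν.prod ν)
          = ∫⁻ s, (∫⁻ t, (‖Φ (s, ω)‖₊ : ℝ≥0∞) * ‖F (t, ω)‖₊ ∂ν) ∂ν :=
        lintegral_prod (fun q => (‖Φ (q.1, ω)‖₊ : ℝ≥0∞) * ‖F (q.2, ω)‖₊)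
          (((hΦm.comp (measurable_fst.prodMk measurable_const)).enorm.mul
            ((hFm.comp (measurable_snd.prodMk measurable_const)).enorm)).aemeasurable)
      rw [hswapk]
      calc ∫⁻ s, (∫⁻ t, (‖Φ (s, ω)‖₊ : ℝ≥0∞) * ‖F (t, ω)‖₊ ∂ν) ∂ν
          = ∫⁻ s, (‖Φ (s, ω)‖₊ : ℝ≥0∞) * (∫⁻ t, (‖F (t, ω)‖₊ : ℝ≥0∞) ∂ν) ∂ν := by
            refine lintegral_congr fun s => ?_
            exact lintegral_const_mul _ ((hFm.comp (measurable_id.prodMk measurable_const)).enorm)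
        _ = (∫⁻ s, (‖Φ (s, ω)‖₊ : ℝ≥0∞) ∂ν) * (∫⁻ t, (‖F (t, ω)‖₊ : ℝ≥0∞) ∂ν) :=
            lintegral_mul_const _ ((hΦm.comp (measurable_id.prodMk measurable_const)).enorm)
        _ ≤ gΦ ω * gF ω := mul_le_mul' (lintegral_mono_set Ioc_subset_Icc_self)
            (lintegral_mono_set Ioc_subset_Icc_self)
        _ < ⊤ := ENNReal.mul_lt_top hgp hgf
    have ha : ∀ s, ∫ t, k s t ∂ν = Φ (s, ω) * X (s, ω) := by
      intro s
      have h1 : Φ (s, ω) * X (s, ω)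
          = ∫ t, Φ (s, ω) * (if s < t then F (t, ω) else 0) ∂ν := (integral_const_mul _ _).symm
      rw [h1]
      refine integral_congr_ae (Filter.Eventually.of_forall fun t => ?_)
      rw [hk]
      simp only [mul_ite, mul_zero]
    have hb2 : ∀ t ∈ Ioc (0:ℝ) 1, ∫ s, k s t ∂ν
        = F (t, ω) * ∫ s in Ioc (0:ℝ) t, Φ (s, ω) := by
      intro t ht
      have h1 : ∀ s, k s t = (Iio t).indicator (fun s => Φ (s, ω) * F (t, ω)) s := by
        intro s
        rw [Set.indicator_apply, hk]
        simp [mem_Iio]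
      rw [integral_congr_ae (Filter.Eventually.of_forall h1),
        integral_indicator measurableSet_Iio, hν,
        Measure.restrict_restrict measurableSet_Iio]
      have h2 : Iio t ∩ Ioc (0:ℝ) 1 = Ioo 0 t := by
        ext s
        simp only [mem_inter_iff, mem_Iio, mem_Ioc, mem_Ioo]
        exact ⟨fun h => ⟨h.2.1, h.1⟩, fun h => ⟨h.2, h.1, le_trans h.2.le ht.2⟩⟩
      rw [h2, ← integral_Ioc_eq_integral_Ioo, integral_mul_const]
      exact mul_comm _ _
    calc ∫ s, Φ (s, ω) * X (s, ω) ∂ν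
        = ∫ s, (∫ t, k s t ∂ν) ∂ν :=
          integral_congr_ae (Filter.Eventually.of_forall fun s => (ha s).symm)
      _ = ∫ t, (∫ s, k s t ∂ν) ∂ν := integral_integral_swap hkint
      _ = ∫ t, F (t, ω) * (∫ s in Ioc (0:ℝ) t, Φ (s, ω)) ∂ν := by
          rw [hν]
          exact setIntegral_congr_fun measurableSet_Ioc fun t ht => hb2 t ht
  -- identification of the right-hand side
  have hRHS : ∀ ω, (∫ t in (0:ℝ)..1, f t ω * (∫ s in (0:ℝ)..t, φ s ω))
      = ∫ t, F (t, ω) * (∫ s in Ioc (0:ℝ) t, Φ (s, ω)) ∂ν := by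
    intro ω
    rw [intervalIntegral.integral_of_le zero_le_one, hν]
    refine setIntegral_congr_fun measurableSet_Ioc fun t ht => ?_
    rw [hFf t ht.2 ω, intervalIntegral.integral_of_le ht.1.le]
    congr 1
    exact setIntegral_congr_fun measurableSet_Ioc fun s hs => (hΦφ s (le_trans hs.2 ht.2) ω).symm
  -- final chain
  calc ∫ s in (0:ℝ)..1, ∫ ω, φ s ω * (P[fun ω' => ∫ t in s..(1:ℝ), f t ω'|ℱ s]) ω ∂P
      = ∫ s, (∫ ω, φ s ω * (P[fun ω' => ∫ t in s..(1:ℝ), f t ω'|ℱ s]) ω ∂P) ∂ν := by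
        rw [intervalIntegral.integral_of_le zero_le_one, hν]
    _ = ∫ s, (∫ ω, Φ (s, ω) * X (s, ω) ∂P) ∂ν := integral_congr_ae hClaim1
    _ = ∫ ω, (∫ s, Φ (s, ω) * X (s, ω) ∂ν) ∂P :=
        integral_integral_swap (f := fun s ω => Φ (s, ω) * X (s, ω)) hHint
    _ = ∫ ω, (∫ t, F (t, ω) * (∫ s in Ioc (0:ℝ) t, Φ (s, ω)) ∂ν) ∂P := integral_congr_ae hClaim3
    _ = ∫ ω, (∫ t in (0:ℝ)..1, f t ω * (∫ s in (0:ℝ)..t, φ s ω)) ∂P :=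
        integral_congr_ae (Filter.Eventually.of_forall fun ω => (hRHS ω).symm)
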